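/- arXiv:1406.0934 — 3 statements merged into one kernel-verified Lean document; each statement's English description precedes it below -/
import Mathlib

section
/- Let F be a finite-dimensional real inner product space, G a finite-dimensional real vector space, and A : F → G a surjective linear map. Equip G with the push-forward inner product ⟨·,·⟩_G, i.e. the bilinear form (g₁, g₂) ↦ ((A ∘ ♯ ∘ A*)⁻¹(g₁))(g₂) where ♯ : F* → F is the inverse of f ↦ ⟨f, ·⟩_F and A* is the dual map of A. Then the restriction of A to the orthogonal complement (ker A)^⊥ of the kernel of A is a linear isometry onto G: for all f₁, f₂ ∈ (ker A)^⊥, ⟨A f₁, A f₂⟩_G = ⟨f₁, f₂⟩_F. -/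
open Module

/-- The restriction of a surjective linear map `A` to `(ker A)ᗮ` is a linear isometry
onto `G`, when `G` is equipped with the push-forward inner product
`(g₁, g₂) ↦ ((A ∘ ♯ ∘ A*)⁻¹ g₁) g₂`. -/
theorem stmt2 {F G : Type*} [NormedAddCommGroup F] [InnerProductSpace ℝ F]
    [FiniteDimensional ℝ F] [AddCommGroup G] [Module ℝ G] [FiniteDimensional ℝ G]
    (A : F →ₗ[ℝ] G) (hA : Function.Surjective A)
    (sharp : Module.Dual ℝ F →ₗ[ℝ] F)
    (hsharp : ∀ (φ : Module.Dual ℝ F) (v : F), φ v = (inner ℝ (sharp φ) v : ℝ)) :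
    Function.Bijective (A ∘ₗ sharp ∘ₗ A.dualMap) ∧
    ∀ f₁ ∈ (LinearMap.ker A)ᗮ, ∀ f₂ ∈ (LinearMap.ker A)ᗮ,
      ∀ η : Module.Dual ℝ G, (A ∘ₗ sharp ∘ₗ A.dualMap) η = A f₁ →
        η (A f₂) = (inner ℝ f₁ f₂ : ℝ) := by
  have key : ∀ (η : Module.Dual ℝ G) (v : F),
      (inner ℝ (sharp (A.dualMap η)) v : ℝ) = η (A v) := by
    intro η v
    rw [← hsharp]
    rfl
  constructor
  · have hinj : Function.Injective (A ∘ₗ sharp ∘ₗ A.dualMap) := by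
      rw [← LinearMap.ker_eq_bot, LinearMap.ker_eq_bot']
      intro η hη
      have hx : sharp (A.dualMap η) ∈ LinearMap.ker A := hη
      have h0 : (inner ℝ (sharp (A.dualMap η)) (sharp (A.dualMap η)) : ℝ) = 0 := by
        rw [key]
        rw [LinearMap.mem_ker] at hx
        rw [hx]; simp
      have hs0 : sharp (A.dualMap η) = 0 := by
        exact inner_self_eq_zero.mp h0
      have hd0 : A.dualMap η = 0 := by
        ext v
        have := key η v
        rw [hs0] at this
        simpa using this.symm
      have hdinj : Function.Injective A.dualMap := A.dualMap_injective_of_surjective hA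
      exact hdinj (by simpa using hd0)
    exact ⟨hinj, (LinearMap.injective_iff_surjective_of_finrank_eq_finrank
      Subspace.dual_finrank_eq).mp hinj⟩
  · intro f₁ _ f₂ hf₂ η hη
    have hA1 : A (sharp (A.dualMap η)) = A f₁ := hη
    have hker : sharp (A.dualMap η) - f₁ ∈ LinearMap.ker A := by
      rw [LinearMap.mem_ker, map_sub, hA1, sub_self]
    have h0 : (inner ℝ (sharp (A.dualMap η) - f₁) f₂ : ℝ) = 0 :=
      (Submodule.mem_orthogonal _ f₂).mp hf₂ _ hker
    have := key η f₂
    rw [← this]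
    rw [inner_sub_left] at h0
    linarith
end

section
/- Let n ≥ 1 and l ∈ ℕ. Let μ be a finite Borel measure on ℝ^n with μ(ℝ^n) > 0 and with compact support, which is invariant under the map ξ ↦ −ξ, and such that for every nonzero real polynomial q in n variables of total degree at most l one has μ({ξ ∈ ℝ^n : q(ξ) ≠ 0}) > 0 (i.e. the support of μ is not contained in any algebraic hypersurface of degree l). For real polynomials q₁, q₂ in n variables of total degree at most l, define κ(q₁, q₂) = (1/μ(ℝ^n)) ∫_{ℝ^n} q₁(iξ) · conj(q₂(iξ)) dμ(ξ) ∈ ℂ, where q(iξ) denotes the evaluation in ℂ of q at the point (iξ₁, …, iξ_n) with i the imaginary unit. Then κ takes only real values and defines an inner product (a symmetric positive-definite real bilinear form) on the real vector space of polynomials in n variables of total degree at most l. -/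
open MeasureTheory MvPolynomial

noncomputable section Stmt6Aux

variable {n : ℕ}

/-- real part polynomial of `ξ ↦ q(iξ)` -/
def reT (q : MvPolynomial (Fin n) ℝ) : MvPolynomial (Fin n) ℝ :=
  ∑ α ∈ q.support, monomial α ((Complex.I ^ (∑ i, α i)).re * q.coeff α)

/-- imaginary part polynomial of `ξ ↦ q(iξ)` -/
def imT (q : MvPolynomial (Fin n) ℝ) : MvPolynomial (Fin n) ℝ :=
  ∑ α ∈ q.support, monomial α ((Complex.I ^ (∑ i, α i)).im * q.coeff α)

lemma coeff_reT (q : MvPolynomial (Fin n) ℝ) (β : Fin n →₀ ℕ) :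
    coeff β (reT q) = (Complex.I ^ (∑ i, β i)).re * q.coeff β := by
  rw [reT, coeff_sum]
  simp only [coeff_monomial]
  rw [Finset.sum_ite_eq' q.support β]
  by_cases h : β ∈ q.support
  · simp [h]
  · simp only [h, if_false]
    rw [notMem_support_iff.mp h, mul_zero]

lemma coeff_imT (q : MvPolynomial (Fin n) ℝ) (β : Fin n →₀ ℕ) :
    coeff β (imT q) = (Complex.I ^ (∑ i, β i)).im * q.coeff β := by
  rw [imT, coeff_sum]
  simp only [coeff_monomial]
  rw [Finset.sum_ite_eq' q.support β]
  by_cases h : β ∈ q.support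
  · simp [h]
  · simp only [h, if_false]
    rw [notMem_support_iff.mp h, mul_zero]

lemma aeval_decomp {n : ℕ} (q : MvPolynomial (Fin n) ℝ) (ξ : Fin n → ℝ) :
    (aeval (fun i => (ξ i : ℂ) * Complex.I) q : ℂ)
      = ((eval ξ (reT q) : ℝ) : ℂ) + ((eval ξ (imT q) : ℝ) : ℂ) * Complex.I := by
  rw [aeval_def, eval₂_eq', reT, imT, map_sum, map_sum]
  simp only [eval_monomial, Finsupp.prod_pow, Complex.ofReal_sum, Complex.ofReal_mul,
    Complex.ofReal_prod, Complex.ofReal_pow, Finset.sum_mul, Complex.coe_algebraMap]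
  rw [← Finset.sum_add_distrib]
  refine Finset.sum_congr rfl fun d _ => ?_
  have hprod : (∏ i, ((ξ i : ℂ) * Complex.I) ^ d i)
      = (∏ i, (ξ i : ℂ) ^ d i) * Complex.I ^ (∑ i, d i) := by
    rw [← Finset.prod_pow_eq_pow_sum, ← Finset.prod_mul_distrib]
    exact Finset.prod_congr rfl fun i _ => mul_pow _ _ _
  rw [hprod]
  linear_combination (-(((q.coeff d : ℝ) : ℂ) * ∏ i, ((ξ i : ℂ)) ^ d i)) *
    (Complex.re_add_im (Complex.I ^ (∑ i, d i)))

lemma reT_imT_eq_zero {q : MvPolynomial (Fin n) ℝ} (h1 : reT q = 0) (h2 : imT q = 0) :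
    q = 0 := by
  ext β
  have hz : (Complex.I ^ (∑ i, β i)) ≠ 0 := pow_ne_zero _ Complex.I_ne_zero
  have hr : (Complex.I ^ (∑ i, β i)).re * q.coeff β = 0 := by
    rw [← coeff_reT, h1, coeff_zero]
  have hi : (Complex.I ^ (∑ i, β i)).im * q.coeff β = 0 := by
    rw [← coeff_imT, h2, coeff_zero]
  have hns : 0 < Complex.normSq (Complex.I ^ (∑ i, β i)) := Complex.normSq_pos.mpr hz
  rw [Complex.normSq_apply] at hns
  have : q.coeff β * ((Complex.I ^ (∑ i, β i)).re * (Complex.I ^ (∑ i, β i)).re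
      + (Complex.I ^ (∑ i, β i)).im * (Complex.I ^ (∑ i, β i)).im) = 0 := by
    linear_combination ((Complex.I ^ (∑ i, β i)).re) * hr
      + ((Complex.I ^ (∑ i, β i)).im) * hi
  rcases mul_eq_zero.mp this with h | h
  · simpa using h
  · exact absurd h (ne_of_gt hns)

lemma support_reT (q : MvPolynomial (Fin n) ℝ) : (reT q).support ⊆ q.support := by
  intro β hβ
  rw [mem_support_iff] at hβ ⊢
  intro h
  rw [coeff_reT, h, mul_zero] at hβ
  exact hβ rfl

lemma support_imT (q : MvPolynomial (Fin n) ℝ) : (imT q).support ⊆ q.support := by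
  intro β hβ
  rw [mem_support_iff] at hβ ⊢
  intro h
  rw [coeff_imT, h, mul_zero] at hβ
  exact hβ rfl

lemma totalDegree_reT (q : MvPolynomial (Fin n) ℝ) : (reT q).totalDegree ≤ q.totalDegree :=
  Finset.sup_mono (support_reT q)

lemma totalDegree_imT (q : MvPolynomial (Fin n) ℝ) : (imT q).totalDegree ≤ q.totalDegree :=
  Finset.sup_mono (support_imT q)

lemma cont_aeval (q : MvPolynomial (Fin n) ℝ) :
    Continuous fun ξ : Fin n → ℝ => (aeval (fun i => (ξ i : ℂ) * Complex.I) q : ℂ) := by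
  have : (fun ξ : Fin n → ℝ => (aeval (fun i => (ξ i : ℂ) * Complex.I) q : ℂ))
      = (fun z : Fin n → ℂ => eval z (map (algebraMap ℝ ℂ) q))
        ∘ (fun ξ i => (ξ i : ℂ) * Complex.I) := by
    funext ξ; simp [eval_map, aeval_def]
  rw [this]
  exact (map (algebraMap ℝ ℂ) q).continuous_eval.comp
    (continuous_pi fun i =>
      (Complex.continuous_ofReal.comp (continuous_apply i)).mul continuous_const)

lemma integrable_cpt {E : Type*} [NormedAddCommGroup E] {μ : Measure (Fin n → ℝ)}
    [IsFiniteMeasure μ] {K : Set (Fin n → ℝ)} (hK : IsCompact K) (hμK : μ Kᶜ = 0)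
    {f : (Fin n → ℝ) → E} (hf : Continuous f) : Integrable f μ := by
  obtain ⟨C, hC⟩ := hK.exists_bound_of_continuousOn hf.continuousOn
  have hae : ∀ᵐ ξ ∂μ, ξ ∈ K := by
    rw [MeasureTheory.ae_iff]
    exact hμK
  exact Integrable.mono' (integrable_const C) hf.aestronglyMeasurable
    (hae.mono fun ξ hξ => hC ξ hξ)

lemma conj_aeval (q : MvPolynomial (Fin n) ℝ) (ξ : Fin n → ℝ) :
    (starRingEnd ℂ) (aeval (fun i => (ξ i : ℂ) * Complex.I) q)
      = aeval (fun i => (((-ξ) i : ℝ) : ℂ) * Complex.I) q := by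
  rw [aeval_def, aeval_def, eval₂_comp_left]
  congr 1
  · refine RingHom.ext fun r => ?_
    simp [Complex.conj_ofReal]
  · funext i
    simp only [Function.comp_apply, map_mul, Complex.conj_ofReal, Complex.conj_I,
      Pi.neg_apply, Complex.ofReal_neg]
    ring

end Stmt6Aux

/-- If `μ` is a finite compactly supported measure on `ℝⁿ` of positive total mass,
invariant under `ξ ↦ -ξ` and not supported on a degree-`l` algebraic hypersurface, then
`κ(q₁, q₂) = μ(ℝⁿ)⁻¹ ∫ q₁(iξ) conj(q₂(iξ)) dμ(ξ)` is real valued and defines an inner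
product (a symmetric positive definite real bilinear form) on the real polynomials of
total degree at most `l`. -/
theorem stmt6 (n l : ℕ) (hn : 1 ≤ n) (μ : Measure (Fin n → ℝ))
    [IsFiniteMeasure μ]
    (hpos : 0 < μ Set.univ)
    (hcpt : ∃ K : Set (Fin n → ℝ), IsCompact K ∧ μ Kᶜ = 0)
    (hsymm : Measure.map (fun ξ => -ξ) μ = μ)
    (hnd : ∀ q : MvPolynomial (Fin n) ℝ, q ≠ 0 → q.totalDegree ≤ l →
      0 < μ {ξ | MvPolynomial.eval ξ q ≠ 0}) :
    ∀ κ : MvPolynomial (Fin n) ℝ → MvPolynomial (Fin n) ℝ → ℂ,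
    (κ = fun q₁ q₂ =>
      (((μ Set.univ).toReal)⁻¹ : ℝ) •
        ∫ ξ, (MvPolynomial.aeval (fun i => (ξ i : ℂ) * Complex.I) q₁) *
          (starRingEnd ℂ) (MvPolynomial.aeval (fun i => (ξ i : ℂ) * Complex.I) q₂) ∂μ) →
    -- κ takes only real values and is symmetric
    (∀ q₁ q₂ : MvPolynomial (Fin n) ℝ, q₁.totalDegree ≤ l → q₂.totalDegree ≤ l →
        (κ q₁ q₂).im = 0 ∧ κ q₁ q₂ = κ q₂ q₁) ∧
    -- κ is bilinear (additive and ℝ-homogeneous in the first variable)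
    (∀ q₁ q₂ q₃ : MvPolynomial (Fin n) ℝ, q₁.totalDegree ≤ l → q₂.totalDegree ≤ l →
        q₃.totalDegree ≤ l → κ (q₁ + q₂) q₃ = κ q₁ q₃ + κ q₂ q₃) ∧
    (∀ (r : ℝ) (q₁ q₂ : MvPolynomial (Fin n) ℝ), q₁.totalDegree ≤ l →
        q₂.totalDegree ≤ l → κ (r • q₁) q₂ = r • κ q₁ q₂) ∧
    -- κ is positive definite
    (∀ q : MvPolynomial (Fin n) ℝ, q ≠ 0 → q.totalDegree ≤ l → 0 < (κ q q).re) := by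
  obtain ⟨K, hK, hμK⟩ := hcpt
  intro κ hκ
  subst hκ
  have hcont : ∀ q₁ q₂ : MvPolynomial (Fin n) ℝ,
      Continuous fun ξ : Fin n → ℝ =>
        (aeval (fun i => (ξ i : ℂ) * Complex.I) q₁) *
          (starRingEnd ℂ) (aeval (fun i => (ξ i : ℂ) * Complex.I) q₂) := fun q₁ q₂ =>
    (cont_aeval q₁).mul (Complex.continuous_conj.comp (cont_aeval q₂))
  have hint : ∀ q₁ q₂ : MvPolynomial (Fin n) ℝ,
      Integrable (fun ξ : Fin n → ℝ =>
        (aeval (fun i => (ξ i : ℂ) * Complex.I) q₁) *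
          (starRingEnd ℂ) (aeval (fun i => (ξ i : ℂ) * Complex.I) q₂)) μ := fun q₁ q₂ =>
    integrable_cpt hK hμK (hcont q₁ q₂)
  have hneg : ∀ f : (Fin n → ℝ) → ℂ, Continuous f →
      ∫ ξ, f (-ξ) ∂μ = ∫ ξ, f ξ ∂μ := by
    intro f hf
    conv_rhs => rw [← hsymm]
    rw [integral_map measurable_neg.aemeasurable hf.aestronglyMeasurable]
  have hJsymm : ∀ q₁ q₂ : MvPolynomial (Fin n) ℝ,
      (∫ ξ, (aeval (fun i => (ξ i : ℂ) * Complex.I) q₁) *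
          (starRingEnd ℂ) (aeval (fun i => (ξ i : ℂ) * Complex.I) q₂) ∂μ)
        = ∫ ξ, (aeval (fun i => (ξ i : ℂ) * Complex.I) q₂) *
          (starRingEnd ℂ) (aeval (fun i => (ξ i : ℂ) * Complex.I) q₁) ∂μ := by
    intro q₁ q₂
    rw [← hneg _ (hcont q₂ q₁)]
    refine integral_congr_ae (Filter.Eventually.of_forall fun ξ => ?_)
    dsimp only
    rw [← conj_aeval q₂ ξ, ← conj_aeval q₁ ξ, Complex.conj_conj]
    ring
  have hconjJ : ∀ q₁ q₂ : MvPolynomial (Fin n) ℝ,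
      (starRingEnd ℂ) (∫ ξ, (aeval (fun i => (ξ i : ℂ) * Complex.I) q₁) *
          (starRingEnd ℂ) (aeval (fun i => (ξ i : ℂ) * Complex.I) q₂) ∂μ)
        = ∫ ξ, (aeval (fun i => (ξ i : ℂ) * Complex.I) q₂) *
          (starRingEnd ℂ) (aeval (fun i => (ξ i : ℂ) * Complex.I) q₁) ∂μ := by
    intro q₁ q₂
    rw [← integral_conj]
    refine integral_congr_ae (Filter.Eventually.of_forall fun ξ => ?_)
    dsimp only
    rw [map_mul, Complex.conj_conj]
    ring
  have hreal : ∀ q₁ q₂ : MvPolynomial (Fin n) ℝ,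
      (∫ ξ, (aeval (fun i => (ξ i : ℂ) * Complex.I) q₁) *
          (starRingEnd ℂ) (aeval (fun i => (ξ i : ℂ) * Complex.I) q₂) ∂μ).im = 0 := by
    intro q₁ q₂
    exact Complex.conj_eq_iff_im.mp ((hconjJ q₁ q₂).trans (hJsymm q₁ q₂).symm)
  refine ⟨?_, ?_, ?_, ?_⟩
  · intro q₁ q₂ _ _
    constructor
    · dsimp only
      rw [Complex.smul_im, hreal q₁ q₂, smul_zero]
    · dsimp only
      rw [hJsymm q₁ q₂]
  · intro q₁ q₂ q₃ _ _ _
    dsimp only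
    have heq : (fun ξ : Fin n → ℝ =>
        (aeval (fun i => (ξ i : ℂ) * Complex.I) (q₁ + q₂)) *
          (starRingEnd ℂ) (aeval (fun i => (ξ i : ℂ) * Complex.I) q₃))
        = fun ξ : Fin n → ℝ =>
          (aeval (fun i => (ξ i : ℂ) * Complex.I) q₁) *
            (starRingEnd ℂ) (aeval (fun i => (ξ i : ℂ) * Complex.I) q₃)
          + (aeval (fun i => (ξ i : ℂ) * Complex.I) q₂) *
            (starRingEnd ℂ) (aeval (fun i => (ξ i : ℂ) * Complex.I) q₃) := by
      funext ξ
      rw [map_add, add_mul]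
    rw [heq, integral_add (hint q₁ q₃) (hint q₂ q₃), smul_add]
  · intro r q₁ q₂ _ _
    dsimp only
    have heq : (fun ξ : Fin n → ℝ =>
        (aeval (fun i => (ξ i : ℂ) * Complex.I) (r • q₁)) *
          (starRingEnd ℂ) (aeval (fun i => (ξ i : ℂ) * Complex.I) q₂))
        = fun ξ : Fin n → ℝ =>
          r • ((aeval (fun i => (ξ i : ℂ) * Complex.I) q₁) *
            (starRingEnd ℂ) (aeval (fun i => (ξ i : ℂ) * Complex.I) q₂)) := by
      funext ξ
      rw [_root_.map_smul, smul_mul_assoc]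
    rw [heq, integral_smul, smul_comm]
  · intro q hq hdeg
    dsimp only
    have hc : 0 < ((μ Set.univ).toReal)⁻¹ :=
      inv_pos.mpr (ENNReal.toReal_pos hpos.ne' (measure_ne_top μ _))
    set g : (Fin n → ℝ) → ℝ :=
      fun ξ => (eval ξ (reT q)) ^ 2 + (eval ξ (imT q)) ^ 2 with hg
    have hre : ∀ ξ : Fin n → ℝ,
        ((aeval (fun i => (ξ i : ℂ) * Complex.I) q) *
          (starRingEnd ℂ) (aeval (fun i => (ξ i : ℂ) * Complex.I) q)).re = g ξ := by
      intro ξ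
      rw [Complex.mul_conj, aeval_decomp q ξ, Complex.ofReal_re]
      simp only [Complex.normSq_apply, Complex.add_re, Complex.add_im, Complex.ofReal_re,
        Complex.ofReal_im, Complex.mul_re, Complex.mul_im, Complex.I_re, Complex.I_im, hg]
      ring
    have hgcont : Continuous g :=
      (((reT q).continuous_eval).pow 2).add (((imT q).continuous_eval).pow 2)
    have hgint : Integrable g μ := integrable_cpt hK hμK hgcont
    have hgnonneg : 0 ≤ g := fun ξ => by positivity
    have hAB : reT q ≠ 0 ∨ imT q ≠ 0 := by
      by_contra h
      push_neg at h
      exact hq (reT_imT_eq_zero h.1 h.2)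
    have hsupp : 0 < μ (Function.support g) := by
      rcases hAB with hA | hB
      · refine lt_of_lt_of_le (hnd (reT q) hA (le_trans (totalDegree_reT q) hdeg))
          (measure_mono fun ξ hξ => ?_)
        simp only [Set.mem_setOf_eq] at hξ
        simp only [Function.mem_support, hg]
        positivity
      · refine lt_of_lt_of_le (hnd (imT q) hB (le_trans (totalDegree_imT q) hdeg))
          (measure_mono fun ξ hξ => ?_)
        simp only [Set.mem_setOf_eq] at hξ
        simp only [Function.mem_support, hg]
        positivity
    have hgpos : 0 < ∫ ξ, g ξ ∂μ :=
      (integral_pos_iff_support_of_nonneg hgnonneg hgint).mpr hsupp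
    have hJre : (∫ ξ, (aeval (fun i => (ξ i : ℂ) * Complex.I) q) *
          (starRingEnd ℂ) (aeval (fun i => (ξ i : ℂ) * Complex.I) q) ∂μ).re
        = ∫ ξ, g ξ ∂μ := by
      have h := integral_re (hint q q)
      simp only [RCLike.re_to_complex] at h
      rw [← h]
      refine integral_congr_ae (Filter.Eventually.of_forall fun ξ => ?_)
      dsimp only
      exact hre ξ
    rw [Complex.smul_re, hJre]
    exact mul_pos hc hgpos
end

section
/- Let n ≥ 1 and 1 ≤ m ≤ n be integers, and let A, B be real symmetric m × m matrices. For ξ ∈ ℝ^n set q_A(ξ) = Σ_{i,j=1}^m A_{ij} ξ_i ξ_j (and similarly q_B). Then ∫_{B^n} q_A(ξ) q_B(ξ) dξ − (1/Vol(B^n)) (∫_{B^n} q_A(ξ) dξ)(∫_{B^n} q_B(ξ) dξ) = (2 Vol(B^n)/((n + 2)(n + 4))) · (Tr(AB) − Tr(A) Tr(B)/(n + 2)), where B^n = {ξ ∈ ℝ^n : ‖ξ‖ ≤ 1} is the closed unit ball for the standard Euclidean norm, the integrals are with respect to the Lebesgue measure on ℝ^n, and Vol(B^n) = ∫_{B^n}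 dξ. -/
open MeasureTheory Matrix Metric Set

variable {n : ℕ}

local notation "E" n => EuclideanSpace ℝ (Fin n)

lemma intOn (g : (E n) → ℝ) (hg : Continuous g) :
    IntegrableOn g (closedBall 0 1) volume :=
  hg.continuousOn.integrableOn_compact (isCompact_closedBall _ _)

lemma setInt_comp (f : (E n) ≃ₗᵢ[ℝ] (E n)) (g : (E n) → ℝ) :
    ∫ x in closedBall (0 : E n) 1, g (f x) = ∫ x in closedBall (0 : E n) 1, g x := by
  have h := f.measurePreserving.setIntegral_preimage_emb
    f.toHomeomorph.measurableEmbedding g (closedBall (0 : E n) 1)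
  rwa [show f ⁻¹' closedBall (0 : E n) 1 = closedBall (0 : E n) 1 by
    ext x; simp [mem_closedBall, dist_eq_norm, f.norm_map]] at h

lemma contApply (i : Fin n) : Continuous fun ξ : E n => ξ i := by
  exact (EuclideanSpace.proj i).continuous

lemma radial_moment (hn : 1 ≤ n) (k : ℕ) :
    ∫ ξ : E n in closedBall 0 1, ‖ξ‖ ^ k =
      n * (volume (closedBall (0 : E n) 1)).toReal / (n + k) := by
  have hnt : Nontrivial (E n) := Module.nontrivial_of_finrank_pos (R := ℝ)
    (by rw [finrank_euclideanSpace_fin]; omega)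
  have hdim : Module.finrank ℝ (E n) = n := finrank_euclideanSpace_fin
  have key := integral_fun_norm_addHaar (volume : Measure (E n))
    (fun r : ℝ => Set.indicator (Set.Iic (1:ℝ)) (fun r => r ^ k) r)
  have hL : (∫ x : E n, Set.indicator (Set.Iic (1:ℝ)) (fun r => r ^ k) ‖x‖) =
      ∫ ξ : E n in closedBall 0 1, ‖ξ‖ ^ k := by
    rw [← integral_indicator (measurableSet_closedBall)]
    congr 1
    funext x
    by_cases h : ‖x‖ ≤ 1
    · rw [Set.indicator_of_mem (by exact h), Set.indicator_of_mem
        (by simpa [mem_closedBall, dist_eq_norm] using h)]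
    · rw [Set.indicator_of_notMem (by exact h), Set.indicator_of_notMem
        (by simpa [mem_closedBall, dist_eq_norm] using h)]
  have hR : (∫ y in Set.Ioi (0:ℝ),
      y ^ (n - 1) • Set.indicator (Set.Iic (1:ℝ)) (fun r => r ^ k) y) =
      1 / (n + k) := by
    have h1 : ∀ y : ℝ, y ^ (n - 1) •
        Set.indicator (Set.Iic (1:ℝ)) (fun r => r ^ k) y =
        Set.indicator (Set.Iic (1:ℝ)) (fun r => r ^ (n - 1 + k)) y := by
      intro y
      by_cases h : y ∈ Set.Iic (1:ℝ)
      · rw [Set.indicator_of_mem h, Set.indicator_of_mem h, smul_eq_mul, ← pow_add]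
      · rw [Set.indicator_of_notMem h, Set.indicator_of_notMem h, smul_zero]
    simp only [h1]
    rw [setIntegral_indicator measurableSet_Iic]
    have : Set.Ioi (0:ℝ) ∩ Set.Iic 1 = Set.Ioc (0:ℝ) 1 := by
      ext y; simp [Set.mem_Ioc, and_comm]
    rw [this, ← intervalIntegral.integral_of_le (by norm_num : (0:ℝ) ≤ 1), integral_pow]
    have : n - 1 + k + 1 = n + k := by omega
    rw [one_pow, show n - 1 + k = n + k - 1 by omega, Nat.cast_sub (by omega : 1 ≤ n + k)]
    push_cast
    ring_nf
  rw [hL, hdim, hR] at key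
  rw [key, Measure.addHaar_closedBall_eq_addHaar_ball]
  simp only [nsmul_eq_mul, smul_eq_mul, measureReal_def]
  ring

noncomputable def mkInvol (F : (E n) →ₗ[ℝ] E n) (hinv : Function.Involutive F)
    (hnorm : ∀ x, ‖F x‖ = ‖x‖) : (E n) ≃ₗᵢ[ℝ] E n :=
  ⟨LinearEquiv.ofInvolutive F hinv, hnorm⟩

noncomputable def flipL (a : Fin n) : (E n) →ₗ[ℝ] E n where
  toFun ξ := WithLp.toLp 2 fun k => if k = a then -(ξ k) else ξ k
  map_add' ξ η := by
    ext k; by_cases h : k = a <;> simp [h, PiLp.add_apply] <;> ring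
  map_smul' c ξ := by
    ext k; by_cases h : k = a <;> simp [h, PiLp.smul_apply, smul_eq_mul] <;> ring

lemma flipL_invol (a : Fin n) : Function.Involutive (flipL a) := by
  intro ξ; ext k
  by_cases h : k = a <;> simp [flipL, h]

lemma flipL_norm (a : Fin n) (ξ : E n) : ‖flipL a ξ‖ = ‖ξ‖ := by
  rw [EuclideanSpace.norm_eq, EuclideanSpace.norm_eq]
  congr 1
  refine Finset.sum_congr rfl fun k _ => ?_
  by_cases h : k = a <;> simp [flipL, h]

noncomputable def flipIso (a : Fin n) : (E n) ≃ₗᵢ[ℝ] E n :=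
  mkInvol (flipL a) (flipL_invol a) (flipL_norm a)

lemma flipIso_apply (a : Fin n) (ξ : E n) (k : Fin n) :
    flipIso a ξ k = if k = a then -(ξ k) else ξ k := rfl

noncomputable def rotL (i j : Fin n) : (E n) →ₗ[ℝ] E n where
  toFun ξ := WithLp.toLp 2 fun k => if k = i then (ξ i + ξ j) / Real.sqrt 2
    else if k = j then (ξ i - ξ j) / Real.sqrt 2 else ξ k
  map_add' ξ η := by
    ext k; simp only [PiLp.add_apply]; split_ifs <;> ring
  map_smul' c ξ := by
    ext k; simp only [PiLp.smul_apply, smul_eq_mul, RingHom.id_apply]; split_ifs <;> ring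

lemma sqrt2_ne : Real.sqrt 2 ≠ 0 := by positivity
lemma sqrt2_sq : Real.sqrt 2 * Real.sqrt 2 = 2 := Real.mul_self_sqrt (by norm_num)

lemma rotL_apply_i (i j : Fin n) (ξ : E n) : rotL i j ξ i = (ξ i + ξ j) / Real.sqrt 2 := by
  simp [rotL]

lemma rotL_apply_j (i j : Fin n) (hij : i ≠ j) (ξ : E n) :
    rotL i j ξ j = (ξ i - ξ j) / Real.sqrt 2 := by
  simp [rotL, hij.symm]

lemma rotL_apply_other (i j k : Fin n) (hki : k ≠ i) (hkj : k ≠ j) (ξ : E n) :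
    rotL i j ξ k = ξ k := by
  simp [rotL, hki, hkj]

lemma rotL_invol (i j : Fin n) (hij : i ≠ j) : Function.Involutive (rotL i j) := by
  intro ξ; ext k
  have hs := @sqrt2_sq
  have hne := @sqrt2_ne
  by_cases h : k = i
  · subst h
    rw [rotL_apply_i, rotL_apply_i, rotL_apply_j _ _ hij]
    field_simp
    rw [Real.sq_sqrt (by norm_num : (0:ℝ) ≤ 2)]
    ring
  · by_cases h2 : k = j
    · subst h2
      rw [rotL_apply_j _ _ hij, rotL_apply_i, rotL_apply_j _ _ hij]
      field_simp
      rw [Real.sq_sqrt (by norm_num : (0:ℝ) ≤ 2)]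
      ring
    · rw [rotL_apply_other _ _ _ h h2, rotL_apply_other _ _ _ h h2]

lemma sum_split (i j : Fin n) (hij : i ≠ j) (g : Fin n → ℝ) :
    ∑ k, g k = g i + g j + ∑ k ∈ (Finset.univ.erase i).erase j, g k := by
  rw [← Finset.sum_erase_add Finset.univ g (Finset.mem_univ i),
    ← Finset.sum_erase_add (Finset.univ.erase i) g
      (Finset.mem_erase.2 ⟨hij.symm, Finset.mem_univ j⟩)]
  ring

lemma rotL_norm (i j : Fin n) (hij : i ≠ j) (ξ : E n) : ‖rotL i j ξ‖ = ‖ξ‖ := by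
  have hs := @sqrt2_sq
  have hne := @sqrt2_ne
  rw [EuclideanSpace.norm_eq, EuclideanSpace.norm_eq]
  congr 1
  rw [sum_split i j hij (fun k => ‖rotL i j ξ k‖ ^ 2), sum_split i j hij (fun k => ‖ξ k‖ ^ 2)]
  have hrest : ∑ k ∈ (Finset.univ.erase i).erase j, ‖rotL i j ξ k‖ ^ 2 =
      ∑ k ∈ (Finset.univ.erase i).erase j, ‖ξ k‖ ^ 2 := by
    refine Finset.sum_congr rfl fun k hk => ?_
    obtain ⟨hkj, hki⟩ : k ≠ j ∧ k ≠ i := by simpa [Finset.mem_erase] using hk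
    rw [rotL_apply_other _ _ _ hki hkj]
  rw [hrest, rotL_apply_i, rotL_apply_j _ _ hij]
  simp only [Real.norm_eq_abs, sq_abs]
  field_simp
  rw [Real.sq_sqrt (by norm_num : (0:ℝ) ≤ 2)]
  ring

noncomputable def rotIso (i j : Fin n) (hij : i ≠ j) : (E n) ≃ₗᵢ[ℝ] E n :=
  mkInvol (rotL i j) (rotL_invol i j hij) (rotL_norm i j hij)

lemma perm_comp (e : Equiv.Perm (Fin n)) (g : (E n) → ℝ) :
    ∫ ξ : E n in closedBall 0 1, g (WithLp.toLp 2 fun k => ξ (e k)) =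
      ∫ ξ : E n in closedBall 0 1, g ξ := by
  have h := setInt_comp (LinearIsometryEquiv.piLpCongrLeft 2 ℝ ℝ e.symm) g
  have he : ∀ ξ : E n, (LinearIsometryEquiv.piLpCongrLeft 2 ℝ ℝ e.symm) ξ =
      (WithLp.toLp 2 fun k => ξ (e k)) := by
    intro ξ; ext k
    simp [LinearIsometryEquiv.piLpCongrLeft_apply, Equiv.piCongrLeft']
  simp only [he] at h
  exact h

lemma int_odd (a : Fin n) (g : (E n) → ℝ) (hodd : ∀ ξ, g (flipIso a ξ) = -g ξ) :
    ∫ ξ : E n in closedBall 0 1, g ξ = 0 := by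
  have h := setInt_comp (flipIso a) g
  simp only [hodd] at h
  rw [integral_neg] at h
  linarith

lemma mom_zero (i j k l a : Fin n)
    (ha : ((if i = a then 1 else 0) + (if j = a then 1 else 0) +
      (if k = a then 1 else 0) + (if l = a then 1 else 0)) % 2 = 1) :
    ∫ ξ : E n in closedBall 0 1, ξ i * ξ j * (ξ k * ξ l) = 0 := by
  refine int_odd a _ fun ξ => ?_
  have hf : ∀ t : Fin n, flipIso a ξ t = (if t = a then (-1:ℝ) else 1) * ξ t := by
    intro t; rw [flipIso_apply]; split_ifs <;> ring
  rw [hf i, hf j, hf k, hf l]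
  split_ifs at ha ⊢ <;> norm_num at ha ⊢ <;> ring

lemma mom2_zero (i j : Fin n) (hij : i ≠ j) :
    ∫ ξ : E n in closedBall 0 1, ξ i * ξ j = 0 := by
  refine int_odd i _ fun ξ => ?_
  rw [flipIso_apply, flipIso_apply, if_pos rfl, if_neg (by exact fun h => hij h.symm)]
  ring

lemma norm_sq_sum (ξ : E n) : ‖ξ‖ ^ 2 = ∑ b, ξ b ^ 2 := by
  rw [EuclideanSpace.norm_eq, Real.sq_sqrt (by positivity)]
  exact Finset.sum_congr rfl fun b _ => by rw [Real.norm_eq_abs, sq_abs]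

lemma mom2_diag (hn : 1 ≤ n) (a : Fin n) :
    ∫ ξ : E n in closedBall 0 1, ξ a ^ 2 =
      (volume (closedBall (0 : E n) 1)).toReal / (n + 2) := by
  have hperm : ∀ b : Fin n, (∫ ξ : E n in closedBall 0 1, ξ b ^ 2) =
      ∫ ξ : E n in closedBall 0 1, ξ a ^ 2 := by
    intro b
    have h := perm_comp (Equiv.swap a b) (fun ξ => ξ a ^ 2)
    simp only [WithLp.ofLp_toLp] at h
    beta_reduce at h
    rw [show (Equiv.swap a b) a = b from Equiv.swap_apply_left a b] at h
    exact h
  have hint : ∀ b : Fin n, IntegrableOn (fun ξ : E n => ξ b ^ 2) (closedBall 0 1) volume :=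
    fun b => intOn _ ((contApply b).pow 2)
  have hrad := radial_moment hn 2
  simp only [norm_sq_sum] at hrad
  rw [integral_finset_sum _ (fun b _ => (hint b))] at hrad
  simp only [hperm] at hrad
  rw [Finset.sum_const, Finset.card_univ, Fintype.card_fin, nsmul_eq_mul] at hrad
  have hn0 : (n:ℝ) ≠ 0 := Nat.cast_ne_zero.mpr (by omega)
  push_cast at hrad
  refine mul_left_cancel₀ hn0 (hrad.trans ?_)
  ring

lemma mkInvol_apply (F : (E n) →ₗ[ℝ] E n) (h1) (h2) (ξ : E n) :
    mkInvol F h1 h2 ξ = F ξ := rfl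

lemma mom4_eq (a b : Fin n) :
    (∫ ξ : E n in closedBall 0 1, ξ b ^ 4) = ∫ ξ : E n in closedBall 0 1, ξ a ^ 4 := by
  have h := perm_comp (Equiv.swap a b) (fun ξ => ξ a ^ 4)
  simp only [WithLp.ofLp_toLp] at h
  beta_reduce at h
  rw [show (Equiv.swap a b) a = b from Equiv.swap_apply_left a b] at h
  exact h

lemma mom22_eq (a b c d : Fin n) (hab : a ≠ b) (hcd : c ≠ d) :
    (∫ ξ : E n in closedBall 0 1, ξ c ^ 2 * ξ d ^ 2) =
      ∫ ξ : E n in closedBall 0 1, ξ a ^ 2 * ξ b ^ 2 := by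
  set e := (Equiv.swap c a).trans (Equiv.swap ((Equiv.swap c a) d) b) with he
  have h1 : (Equiv.swap c a) d ≠ a := by
    intro h
    exact hcd (((Equiv.swap c a).injective (h.trans (Equiv.swap_apply_left c a).symm)).symm)
  have hec : e c = a := by
    rw [he, Equiv.trans_apply, Equiv.swap_apply_left]
    exact Equiv.swap_apply_of_ne_of_ne (Ne.symm h1) hab
  have hed : e d = b := by
    rw [he, Equiv.trans_apply]
    exact Equiv.swap_apply_left _ _
  have h := perm_comp e (fun ξ => ξ c ^ 2 * ξ d ^ 2)
  simp only [WithLp.ofLp_toLp] at h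
  beta_reduce at h
  rw [hec, hed] at h
  exact h.symm

lemma p_eq_3q (a b : Fin n) (hab : a ≠ b) :
    (∫ ξ : E n in closedBall 0 1, ξ a ^ 4) =
      3 * ∫ ξ : E n in closedBall 0 1, ξ a ^ 2 * ξ b ^ 2 := by
  have hs := @sqrt2_sq
  have hne := @sqrt2_ne
  have h := setInt_comp (rotIso a b hab) (fun ξ => ξ a ^ 4)
  have happ : ∀ ξ : E n, (rotIso a b hab ξ) a = (ξ a + ξ b) / Real.sqrt 2 :=
    fun ξ => rotL_apply_i a b ξ
  simp only [happ] at h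
  have hpt : ∀ ξ : E n, ((ξ a + ξ b) / Real.sqrt 2) ^ 4 =
      (1/4) * ξ a ^ 4 + (ξ a ^ 3 * ξ b + ((3/2) * (ξ a ^ 2 * ξ b ^ 2) +
        (ξ a * ξ b ^ 3 + (1/4) * ξ b ^ 4))) := by
    intro ξ
    have h4 : (Real.sqrt 2) ^ 4 = 4 := by
      rw [show (4:ℕ) = 2 + 2 from rfl, pow_add, Real.sq_sqrt (by norm_num : (0:ℝ) ≤ 2)]
      norm_num
    field_simp
    rw [h4]
    ring
  rw [setIntegral_congr_fun measurableSet_closedBall (fun ξ _ => hpt ξ)] at h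
  have c1 : Continuous fun ξ : E n => (1/4 : ℝ) * ξ a ^ 4 :=
    continuous_const.mul ((contApply a).pow 4)
  have c2 : Continuous fun ξ : E n => ξ a ^ 3 * ξ b :=
    ((contApply a).pow 3).mul (contApply b)
  have c3 : Continuous fun ξ : E n => (3/2 : ℝ) * (ξ a ^ 2 * ξ b ^ 2) :=
    continuous_const.mul (((contApply a).pow 2).mul ((contApply b).pow 2))
  have c4 : Continuous fun ξ : E n => ξ a * ξ b ^ 3 :=
    (contApply a).mul ((contApply b).pow 3)
  have c5 : Continuous fun ξ : E n => (1/4 : ℝ) * ξ b ^ 4 :=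
    continuous_const.mul ((contApply b).pow 4)
  have i45 : IntegrableOn (fun ξ : E n => ξ a * ξ b ^ 3 + (1/4 : ℝ) * ξ b ^ 4)
      (closedBall 0 1) volume := intOn _ (c4.add c5)
  have i345 : IntegrableOn (fun ξ : E n => (3/2 : ℝ) * (ξ a ^ 2 * ξ b ^ 2) +
      (ξ a * ξ b ^ 3 + (1/4 : ℝ) * ξ b ^ 4)) (closedBall 0 1) volume :=
    intOn _ (c3.add (c4.add c5))
  have i2345 : IntegrableOn (fun ξ : E n => ξ a ^ 3 * ξ b + ((3/2 : ℝ) * (ξ a ^ 2 * ξ b ^ 2) +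
      (ξ a * ξ b ^ 3 + (1/4 : ℝ) * ξ b ^ 4))) (closedBall 0 1) volume :=
    intOn _ (c2.add (c3.add (c4.add c5)))
  rw [integral_add (intOn _ c1) i2345, integral_add (intOn _ c2) i345,
    integral_add (intOn _ c3) i45, integral_add (intOn _ c4) (intOn _ c5),
    integral_const_mul, integral_const_mul, integral_const_mul] at h
  have hz1 : (∫ ξ : E n in closedBall 0 1, ξ a ^ 3 * ξ b) = 0 := by
    refine int_odd b _ fun ξ => ?_
    rw [flipIso_apply, flipIso_apply, if_pos rfl, if_neg (by exact fun hh => hab hh)]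
    ring
  have hz2 : (∫ ξ : E n in closedBall 0 1, ξ a * ξ b ^ 3) = 0 := by
    refine int_odd a _ fun ξ => ?_
    rw [flipIso_apply, flipIso_apply, if_pos rfl, if_neg (by exact fun hh => hab hh.symm)]
    ring
  rw [hz1, hz2, mom4_eq a b] at h
  linarith

lemma mom22_val (hn : 1 ≤ n) (a b : Fin n) (hab : a ≠ b) :
    ∫ ξ : E n in closedBall 0 1, ξ a ^ 2 * ξ b ^ 2 =
      (volume (closedBall (0 : E n) 1)).toReal / ((n + 2) * (n + 4)) := by
  set q := ∫ ξ : E n in closedBall 0 1, ξ a ^ 2 * ξ b ^ 2 with hq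
  set V := (volume (closedBall (0 : E n) 1)).toReal with hV
  have hrad := radial_moment hn 4
  have hpt : ∀ ξ : E n, ‖ξ‖ ^ 4 = ∑ c : Fin n, ∑ d : Fin n, ξ c ^ 2 * ξ d ^ 2 := by
    intro ξ
    rw [show (4:ℕ) = 2 * 2 from rfl, pow_mul, norm_sq_sum, pow_two, Finset.sum_mul_sum]
  rw [setIntegral_congr_fun measurableSet_closedBall (fun ξ _ => hpt ξ)] at hrad
  rw [integral_finset_sum _ (fun c _ => intOn _ (by
      exact continuous_finset_sum _ fun d _ => ((contApply c).pow 2).mul ((contApply d).pow 2)))]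
    at hrad
  have hinner : ∀ c : Fin n, (∫ ξ : E n in closedBall 0 1, ∑ d : Fin n, ξ c ^ 2 * ξ d ^ 2) =
      3 * q + (n - 1) * q := by
    intro c
    rw [integral_finset_sum _ (fun d _ => intOn _ (by exact ((contApply c).pow 2).mul ((contApply d).pow 2)))]
    rw [← Finset.add_sum_erase _ _ (Finset.mem_univ c)]
    have hdiag : (∫ ξ : E n in closedBall 0 1, ξ c ^ 2 * ξ c ^ 2) = 3 * q := by
      have h1 : (∫ ξ : E n in closedBall 0 1, ξ c ^ 2 * ξ c ^ 2) =
          ∫ ξ : E n in closedBall 0 1, ξ c ^ 4 := by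
        refine setIntegral_congr_fun measurableSet_closedBall (fun ξ _ => by ring)
      rw [h1, mom4_eq a c, p_eq_3q a b hab]
    have hoff : ∀ d ∈ Finset.univ.erase c, (∫ ξ : E n in closedBall 0 1, ξ c ^ 2 * ξ d ^ 2) = q :=
      fun d hd => mom22_eq a b c d hab (Ne.symm (Finset.mem_erase.1 hd).1)
    rw [hdiag, Finset.sum_congr rfl hoff, Finset.sum_const, Finset.card_erase_of_mem
      (Finset.mem_univ c), Finset.card_univ, Fintype.card_fin, nsmul_eq_mul,
      Nat.cast_sub hn, Nat.cast_one]
  rw [Finset.sum_congr rfl (fun c _ => hinner c), Finset.sum_const, Finset.card_univ,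
    Fintype.card_fin, nsmul_eq_mul] at hrad
  have hn0 : (n:ℝ) ≠ 0 := Nat.cast_ne_zero.mpr (by omega)
  have h2 : (n:ℝ) + 2 ≠ 0 := by positivity
  have h4 : (n:ℝ) + 4 ≠ 0 := by positivity
  push_cast at hrad
  rw [← hV] at hrad
  have key : (n:ℝ) * ((n + 2) * q) = (n:ℝ) * (V / (n + 4)) := by
    rw [show (n:ℝ) * ((n + 2) * q) = n * (3 * q + (n - 1) * q) from by ring, hrad]
    ring
  have h22 := mul_left_cancel₀ hn0 key
  field_simp at h22 ⊢
  linarith [h22]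

lemma mom4_val (hn : 1 ≤ n) (a : Fin n) :
    ∫ ξ : E n in closedBall 0 1, ξ a ^ 4 =
      3 * ((volume (closedBall (0 : E n) 1)).toReal / ((n + 2) * (n + 4))) := by
  by_cases hex : ∃ b : Fin n, b ≠ a
  · obtain ⟨b, hb⟩ := hex
    rw [p_eq_3q a b (Ne.symm hb), mom22_val hn a b (Ne.symm hb)]
  · push_neg at hex
    have hn1 : n = 1 := by
      have hcard : Fintype.card (Fin n) ≤ 1 :=
        Fintype.card_le_one_iff.2 fun x y => (hex x).trans (hex y).symm
      rw [Fintype.card_fin] at hcard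
      omega
    subst hn1
    have hpt : ∀ ξ : E 1, ξ a ^ 4 = ‖ξ‖ ^ 4 := by
      intro ξ
      rw [show (4:ℕ) = 2 * 2 from rfl, pow_mul, pow_mul, norm_sq_sum]
      congr 1
      rw [show a = 0 from Subsingleton.elim a 0, Fin.sum_univ_one]
    rw [setIntegral_congr_fun measurableSet_closedBall (fun ξ _ => hpt ξ),
      radial_moment (le_refl 1) 4]
    norm_num
    ring

lemma mom2_master (hn : 1 ≤ n) (i j : Fin n) :
    ∫ ξ : E n in closedBall 0 1, ξ i * ξ j =
      (volume (closedBall (0 : E n) 1)).toReal / (n + 2) * (if i = j then 1 else 0) := by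
  by_cases h : i = j
  · subst h
    rw [setIntegral_congr_fun measurableSet_closedBall
      (fun ξ _ => by ring : ∀ ξ ∈ closedBall (0 : E n) 1, ξ i * ξ i = ξ i ^ 2),
      mom2_diag hn i, if_pos rfl, mul_one]
  · rw [mom2_zero i j h, if_neg h, mul_zero]

lemma mom4_master (hn : 1 ≤ n) (i j k l : Fin n) :
    ∫ ξ : E n in closedBall 0 1, ξ i * ξ j * (ξ k * ξ l) =
      (volume (closedBall (0 : E n) 1)).toReal / ((n + 2) * (n + 4)) *
        ((if i = j then 1 else 0) * (if k = l then 1 else 0) +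
         (if i = k then 1 else 0) * (if j = l then 1 else 0) +
         (if i = l then 1 else 0) * (if j = k then 1 else 0)) := by
  by_cases hij : i = j
  · subst hij
    by_cases hik : i = k
    · subst hik
      by_cases hil : i = l
      · subst hil
        rw [setIntegral_congr_fun measurableSet_closedBall
          (fun ξ _ => by ring : ∀ ξ ∈ closedBall (0 : E n) 1, ξ i * ξ i * (ξ i * ξ i) = ξ i ^ 4),
          mom4_val hn i]
        simp
        ring
      · rw [mom_zero i i i l l (by simp [hil])]
        simp [hil]
    · by_cases hkl : k = l
      · subst hkl
        rw [setIntegral_congr_fun measurableSet_closedBall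
          (fun ξ _ => by ring : ∀ ξ ∈ closedBall (0 : E n) 1,
            ξ i * ξ i * (ξ k * ξ k) = ξ i ^ 2 * ξ k ^ 2),
          mom22_val hn i k hik]
        simp [hik]
      · rw [mom_zero i i k l k (by norm_num [hik, Ne.symm hkl])]
        simp [hik, hkl, Ne.symm hik, Ne.symm hkl]
  · by_cases hik : i = k
    · subst hik
      by_cases hjl : j = l
      · subst hjl
        rw [setIntegral_congr_fun measurableSet_closedBall
          (fun ξ _ => by ring : ∀ ξ ∈ closedBall (0 : E n) 1,
            ξ i * ξ j * (ξ i * ξ j) = ξ i ^ 2 * ξ j ^ 2),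
          mom22_val hn i j hij]
        simp [hij, Ne.symm hij]
      · rw [mom_zero i j i l j (by norm_num [hij, Ne.symm hjl])]
        simp [hij, hjl, Ne.symm hij, Ne.symm hjl]
    · by_cases hil : i = l
      · subst hil
        by_cases hjk : j = k
        · subst hjk
          rw [setIntegral_congr_fun measurableSet_closedBall
            (fun ξ _ => by ring : ∀ ξ ∈ closedBall (0 : E n) 1,
              ξ i * ξ j * (ξ j * ξ i) = ξ i ^ 2 * ξ j ^ 2),
            mom22_val hn i j hij]
          simp [hij, hik, Ne.symm hij, Ne.symm hik]
        · rw [mom_zero i j k i j (by norm_num [hij, Ne.symm hjk])]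
          simp [hij, hik, hjk, Ne.symm hij, Ne.symm hik, Ne.symm hjk]
      · rw [mom_zero i j k l i (by simp [Ne.symm hij, Ne.symm hik, Ne.symm hil])]
        simp [hij, hik, hil, Ne.symm hij, Ne.symm hik, Ne.symm hil]

lemma sum_eval2 (m : ℕ) (C : Matrix (Fin m) (Fin m) ℝ) (c : ℝ) :
    ∑ i : Fin m, ∑ j : Fin m, C i j * (c * if i = j then (1:ℝ) else 0) = c * C.trace := by
  simp only [mul_ite, mul_one, mul_zero, Finset.sum_ite_eq, Finset.mem_univ, if_true]
  simp only [Matrix.trace, Matrix.diag, Finset.mul_sum]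
  exact Finset.sum_congr rfl fun i _ => by ring

lemma sum_eval4 (m : ℕ) (A B : Matrix (Fin m) (Fin m) ℝ) (hB : B.IsSymm) (c : ℝ) :
    ∑ i : Fin m, ∑ j : Fin m, ∑ k : Fin m, ∑ l : Fin m, A i j * B k l *
      (c * ((if i = j then (1:ℝ) else 0) * (if k = l then 1 else 0) +
        (if i = k then 1 else 0) * (if j = l then 1 else 0) +
        (if i = l then 1 else 0) * (if j = k then 1 else 0))) =
    c * (A.trace * B.trace + 2 * (A * B).trace) := by
  have hBs : ∀ i j, B j i = B i j := fun i j => hB.apply i j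
  simp only [mul_add, mul_ite, ite_mul, mul_one, mul_zero, zero_mul, one_mul,
    Finset.sum_add_distrib, Finset.sum_ite_eq, Finset.sum_ite_eq', Finset.mem_univ, if_true]
  simp only [Matrix.trace, Matrix.diag, Matrix.mul_apply, Finset.mul_sum, Finset.sum_mul]
  simp only [Finset.sum_ite_irrel, Finset.sum_const_zero, Finset.sum_ite_eq, Finset.mem_univ,
    if_true, hBs]
  rw [Finset.sum_comm (γ := Fin m)]
  simp only [← Finset.sum_add_distrib]
  exact Finset.sum_congr rfl fun y _ => Finset.sum_congr rfl fun x _ => by ring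

/-- Covariance identity for quadratic forms on the unit ball: for symmetric `m × m`
matrices `A, B` with `m ≤ n` and `q_A(ξ) = ∑ᵢⱼ Aᵢⱼ ξᵢ ξⱼ`,
`∫ q_A q_B − Vol⁻¹ (∫ q_A)(∫ q_B) = (2 Vol/((n+2)(n+4))) (Tr(AB) − Tr(A)Tr(B)/(n+2))`. -/
theorem stmt13 (n m : ℕ) (hn : 1 ≤ n) (hm : 1 ≤ m) (hmn : m ≤ n)
    (A B : Matrix (Fin m) (Fin m) ℝ) (hA : A.IsSymm) (hB : B.IsSymm) :
    (∫ ξ : EuclideanSpace ℝ (Fin n) in Metric.closedBall 0 1,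
      (∑ i : Fin m, ∑ j : Fin m, A i j * (ξ (Fin.castLE hmn i) * ξ (Fin.castLE hmn j))) *
      (∑ i : Fin m, ∑ j : Fin m, B i j * (ξ (Fin.castLE hmn i) * ξ (Fin.castLE hmn j)))) -
    (1 / (volume (Metric.closedBall (0 : EuclideanSpace ℝ (Fin n)) 1)).toReal) *
      (∫ ξ : EuclideanSpace ℝ (Fin n) in Metric.closedBall 0 1,
        ∑ i : Fin m, ∑ j : Fin m, A i j * (ξ (Fin.castLE hmn i) * ξ (Fin.castLE hmn j))) *
      (∫ ξ : EuclideanSpace ℝ (Fin n) in Metric.closedBall 0 1,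
        ∑ i : Fin m, ∑ j : Fin m, B i j * (ξ (Fin.castLE hmn i) * ξ (Fin.castLE hmn j))) =
    2 * (volume (Metric.closedBall (0 : EuclideanSpace ℝ (Fin n)) 1)).toReal /
        ((n + 2) * (n + 4)) *
      ((A * B).trace - A.trace * B.trace / (n + 2)) := by
  have hV0 : 0 < (volume (Metric.closedBall (0 : EuclideanSpace ℝ (Fin n)) 1)).toReal := by
    refine ENNReal.toReal_pos (ne_of_gt ?_) (ne_of_lt measure_closedBall_lt_top)
    exact lt_of_lt_of_le (measure_ball_pos volume 0 one_pos) (measure_mono ball_subset_closedBall)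
  set V := (volume (Metric.closedBall (0 : EuclideanSpace ℝ (Fin n)) 1)).toReal with hV
  -- second moments
  have hI1 : ∀ C : Matrix (Fin m) (Fin m) ℝ,
      (∫ ξ : EuclideanSpace ℝ (Fin n) in Metric.closedBall 0 1,
        ∑ i : Fin m, ∑ j : Fin m, C i j * (ξ (Fin.castLE hmn i) * ξ (Fin.castLE hmn j))) =
      V / (n + 2) * C.trace := by
    intro C
    rw [integral_finset_sum _ (fun i _ => intOn _ (by exact (continuous_finset_sum _ fun j _ =>
      continuous_const.mul ((contApply _).mul (contApply _)))))]
    have hstep : ∀ i : Fin m,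
        (∫ ξ : EuclideanSpace ℝ (Fin n) in Metric.closedBall 0 1,
          ∑ j : Fin m, C i j * (ξ (Fin.castLE hmn i) * ξ (Fin.castLE hmn j))) =
        ∑ j : Fin m, C i j * ((V / (n + 2)) * if i = j then 1 else 0) := by
      intro i
      rw [integral_finset_sum _ (fun j _ => intOn _
        (by exact continuous_const.mul ((contApply _).mul (contApply _))))]
      refine Finset.sum_congr rfl fun j _ => ?_
      rw [integral_const_mul, mom2_master hn (Fin.castLE hmn i) (Fin.castLE hmn j)]
      simp [Fin.castLE_inj, hV]
    rw [Finset.sum_congr rfl (fun i _ => hstep i), sum_eval2]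
  -- fourth moments
  have hI2 : (∫ ξ : EuclideanSpace ℝ (Fin n) in Metric.closedBall 0 1,
      (∑ i : Fin m, ∑ j : Fin m, A i j * (ξ (Fin.castLE hmn i) * ξ (Fin.castLE hmn j))) *
      (∑ i : Fin m, ∑ j : Fin m, B i j * (ξ (Fin.castLE hmn i) * ξ (Fin.castLE hmn j)))) =
      V / ((n + 2) * (n + 4)) * (A.trace * B.trace + 2 * (A * B).trace) := by
    have hexp : ∀ ξ : EuclideanSpace ℝ (Fin n),
        (∑ i : Fin m, ∑ j : Fin m, A i j * (ξ (Fin.castLE hmn i) * ξ (Fin.castLE hmn j))) *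
        (∑ i : Fin m, ∑ j : Fin m, B i j * (ξ (Fin.castLE hmn i) * ξ (Fin.castLE hmn j))) =
        ∑ i : Fin m, ∑ j : Fin m, ∑ k : Fin m, ∑ l : Fin m, A i j * B k l *
          (ξ (Fin.castLE hmn i) * ξ (Fin.castLE hmn j) *
            (ξ (Fin.castLE hmn k) * ξ (Fin.castLE hmn l))) := by
      intro ξ
      rw [Finset.sum_mul_sum]
      refine Finset.sum_congr rfl fun i _ => ?_
      refine (Finset.sum_congr rfl fun k _ => Finset.sum_mul_sum _ _ _ _).trans ?_
      rw [Finset.sum_comm]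
      refine Finset.sum_congr rfl fun j _ => Finset.sum_congr rfl fun k _ =>
        Finset.sum_congr rfl fun l _ => by ring
    rw [setIntegral_congr_fun measurableSet_closedBall (fun ξ _ => hexp ξ)]
    have cmon : ∀ a b c d : Fin n, Continuous fun ξ : EuclideanSpace ℝ (Fin n) =>
        ξ a * ξ b * (ξ c * ξ d) :=
      fun a b c d => ((contApply a).mul (contApply b)).mul ((contApply c).mul (contApply d))
    rw [integral_finset_sum _ (fun i _ => intOn _ (by exact (continuous_finset_sum _ fun j _ =>
      continuous_finset_sum _ fun k _ => continuous_finset_sum _ fun l _ =>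
      continuous_const.mul (cmon _ _ _ _))))]
    have hstep : ∀ i : Fin m,
        (∫ ξ : EuclideanSpace ℝ (Fin n) in Metric.closedBall 0 1,
          ∑ j : Fin m, ∑ k : Fin m, ∑ l : Fin m, A i j * B k l *
            (ξ (Fin.castLE hmn i) * ξ (Fin.castLE hmn j) *
              (ξ (Fin.castLE hmn k) * ξ (Fin.castLE hmn l)))) =
        ∑ j : Fin m, ∑ k : Fin m, ∑ l : Fin m, A i j * B k l *
          (V / ((n + 2) * (n + 4)) *
            ((if i = j then (1:ℝ) else 0) * (if k = l then 1 else 0) +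
             (if i = k then 1 else 0) * (if j = l then 1 else 0) +
             (if i = l then 1 else 0) * (if j = k then 1 else 0))) := by
      intro i
      rw [integral_finset_sum _ (fun j _ => intOn _ (by exact (continuous_finset_sum _ fun k _ =>
        continuous_finset_sum _ fun l _ => continuous_const.mul (cmon _ _ _ _))))]
      refine Finset.sum_congr rfl fun j _ => ?_
      rw [integral_finset_sum _ (fun k _ => intOn _ (by exact (continuous_finset_sum _ fun l _ =>
        continuous_const.mul (cmon _ _ _ _))))]
      refine Finset.sum_congr rfl fun k _ => ?_
      rw [integral_finset_sum _ (fun l _ => intOn _ (by exact continuous_const.mul (cmon _ _ _ _)))]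
      refine Finset.sum_congr rfl fun l _ => ?_
      rw [integral_const_mul, mom4_master hn (Fin.castLE hmn i) (Fin.castLE hmn j)
        (Fin.castLE hmn k) (Fin.castLE hmn l)]
      simp [Fin.castLE_inj, hV]
    rw [Finset.sum_congr rfl (fun i _ => hstep i), sum_eval4 m A B hB]
  rw [hI1 A, hI1 B, hI2]
  have h2 : (n:ℝ) + 2 ≠ 0 := by positivity
  have h4 : (n:ℝ) + 4 ≠ 0 := by positivity
  have hVne : V ≠ 0 := ne_of_gt hV0
  field_simp
  ring
end
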